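/- In ZF: for every natural number k, there is a 2-colouring of the subsets of ℝ of order type ω + k with no homogeneous subset of order type ω + ω + k and no homogeneous subset of order type ω* + ω + k. Specifically, fixing an enumeration ⟨q_n⟩ of ℚ and N(x,y) = min{n : q_n ∈ [min(x,y), max(x,y))}, the colouring F(x̄) = 0 iff N(x_0,x_1) > N(x_2,x_3) (where x_0 < x_1 < x_2 < x_3 are the four least elements of x̄) has no such homogeneous sets. -/

import Mathlib

/-- `Nidx q x y` is the least `n` with `x ≤ q n < y`, for a fixed enumeration
`q` of the rationals. -/
noncomputable def Nidx (q : ℕ → ℚ) (x y : ℝ) : ℕ :=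
  sInf {n : ℕ | x ≤ (q n : ℝ) ∧ (q n : ℝ) < y}

section Aux

variable (q : ℕ → ℚ)

lemma Nidx_mem (hq : Function.Surjective q) {x y : ℝ} (hxy : x < y) :
    x ≤ (q (Nidx q x y) : ℝ) ∧ ((q (Nidx q x y) : ℝ)) < y := by
  obtain ⟨r, hr1, hr2⟩ := exists_rat_btwn hxy
  obtain ⟨n, rfl⟩ := hq r
  exact Nat.sInf_mem (⟨n, hr1.le, hr2⟩ : {m : ℕ | x ≤ (q m : ℝ) ∧ (q m : ℝ) < y}.Nonempty)

lemma Nidx_le {x y : ℝ} {n : ℕ} (h1 : x ≤ (q n : ℝ)) (h2 : ((q n : ℝ)) < y) :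
    Nidx q x y ≤ n :=
  Nat.sInf_le ⟨h1, h2⟩

lemma Nidx_mono (hq : Function.Surjective q) {x y x' y' : ℝ}
    (h1 : x' ≤ x) (h2 : x < y) (h3 : y ≤ y') :
    Nidx q x' y' ≤ Nidx q x y := by
  obtain ⟨m1, m2⟩ := Nidx_mem q hq h2
  exact Nidx_le q (h1.trans m1) (m2.trans_le h3)

lemma Nidx_ne (hq : Function.Surjective q) {x y x' y' : ℝ}
    (h2 : x < y) (h : y ≤ x') (h2' : x' < y') :
    Nidx q x y ≠ Nidx q x' y' := by
  intro he
  obtain ⟨_, m2⟩ := Nidx_mem q hq h2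
  obtain ⟨m1', _⟩ := Nidx_mem q hq h2'
  rw [he] at m2
  exact absurd (m2.trans_le (h.trans m1')) (lt_irrefl _)

/-- Pigeonhole: among infinitely many pairwise disjoint intervals, some `Nidx` exceeds `m`. -/
lemma Nidx_exists_big (hq : Function.Surjective q) (a b : ℕ → ℝ)
    (hab : ∀ i, a i < b i) (hd : ∀ i j, i < j → b i ≤ a j ∨ b j ≤ a i) (m : ℕ) :
    ∃ i, m < Nidx q (a i) (b i) := by
  by_contra hcon
  push_neg at hcon
  have hinj : Function.Injective
      (fun i : Fin (m + 2) =>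
        (⟨Nidx q (a i) (b i), Nat.lt_succ_of_le (hcon i)⟩ : Fin (m + 1))) := by
    intro i j hij
    simp only [Fin.mk.injEq] at hij
    by_contra hne
    rcases lt_or_gt_of_ne (fun h : (i : ℕ) = (j : ℕ) => hne (Fin.ext h)) with h | h
    · rcases hd i j h with hc | hc
      · exact Nidx_ne q hq (hab i) hc (hab j) hij
      · exact Nidx_ne q hq (hab j) hc (hab i) hij.symm
    · rcases hd j i h with hc | hc
      · exact Nidx_ne q hq (hab j) hc (hab i) hij.symm
      · exact Nidx_ne q hq (hab i) hc (hab j) hij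
  have := Fintype.card_le_of_injective _ hinj
  simp at this

end Aux

instance wfltSumLexNatFin {k : ℕ} : WellFoundedLT (ℕ ⊕ₗ Fin k) :=
  ⟨Sum.lex_wf wellFounded_lt wellFounded_lt⟩

lemma strictMono_sumElimLex {γ : Type*} [Preorder γ] {k : ℕ} (g1 : ℕ → γ) (g2 : Fin k → γ)
    (h1 : StrictMono g1) (h2 : StrictMono g2) (h12 : ∀ n j, g1 n < g2 j) :
    StrictMono (fun p : ℕ ⊕ₗ Fin k => Sum.elim g1 g2 (ofLex p)) := by
  intro p p' hpp
  rw [Sum.Lex.lt_def] at hpp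
  cases hpp with
  | inl h => exact h1 h
  | inr h => exact h2 h
  | sep a b => exact h12 a b

/-- The colouring. -/
noncomputable def Fcol (q : ℕ → ℚ) (k : ℕ) (A : Set ℝ) : Fin 2 := by
  classical
  exact if h : Nonempty ((ℕ ⊕ₗ Fin k) ≃o A) then
    (if Nidx q (h.some (toLex (Sum.inl 2)) : ℝ) (h.some (toLex (Sum.inl 3)) : ℝ) <
        Nidx q (h.some (toLex (Sum.inl 0)) : ℝ) (h.some (toLex (Sum.inl 1)) : ℝ)
      then 0 else 1)
  else 1

/-- (ZF) For every `k`, the colouring of the subsets of `ℝ` of order type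
`ω + k` (represented by `ℕ ⊕ₗ Fin k`) giving `x̄` colour `0` iff
`N(x₀,x₁) > N(x₂,x₃)`, where `x₀ < x₁ < x₂ < x₃` are the four least elements of
`x̄`, has no homogeneous set of order type `ω + ω + k` and none of order type
`ω* + ω + k`. -/
theorem no_homogeneous_omega_omega_k (q : ℕ → ℚ) (hq : Function.Bijective q) (k : ℕ) :
    ∃ F : Set ℝ → Fin 2,
      (∀ (A : Set ℝ) (e : (ℕ ⊕ₗ Fin k) ≃o ↥A),
        (F A = 0 ↔
          Nidx q (e (toLex (Sum.inl 2)) : ℝ) (e (toLex (Sum.inl 3)) : ℝ) <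
            Nidx q (e (toLex (Sum.inl 0)) : ℝ) (e (toLex (Sum.inl 1)) : ℝ))) ∧
      ∀ H : Set ℝ,
        (Nonempty (↥H ≃o (ℕ ⊕ₗ (ℕ ⊕ₗ Fin k))) ∨
          Nonempty (↥H ≃o (ℕᵒᵈ ⊕ₗ (ℕ ⊕ₗ Fin k)))) →
        ∃ s t : Set ℝ, s ⊆ H ∧ t ⊆ H ∧
          Nonempty (↥s ≃o (ℕ ⊕ₗ Fin k)) ∧ Nonempty (↥t ≃o (ℕ ⊕ₗ Fin k)) ∧
          F s ≠ F t := by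
  have hqs : Function.Surjective q := hq.2
  -- Part 1: the colouring is computed by any order isomorphism.
  have part1 : ∀ (A : Set ℝ) (e : (ℕ ⊕ₗ Fin k) ≃o ↥A),
      (Fcol q k A = 0 ↔
        Nidx q (e (toLex (Sum.inl 2)) : ℝ) (e (toLex (Sum.inl 3)) : ℝ) <
          Nidx q (e (toLex (Sum.inl 0)) : ℝ) (e (toLex (Sum.inl 1)) : ℝ)) := by
    intro A e
    have hsub : Subsingleton ((ℕ ⊕ₗ Fin k) ≃o A) := OrderIso.subsingleton_of_wellFoundedLT
    have hne : Nonempty ((ℕ ⊕ₗ Fin k) ≃o A) := ⟨e⟩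
    have hsome : hne.some = e := Subsingleton.elim _ _
    rw [Fcol]
    simp only [hne, dif_pos, hsome]
    split_ifs with hcond
    · simpa using hcond
    · exact iff_of_false (by decide) hcond
  -- Builder: from a strictly monotone map `x : ℕ ⊕ₗ Fin k → ℝ` into `H`, get a subset.
  have build : ∀ (H : Set ℝ) (x : ℕ ⊕ₗ Fin k → ℝ), StrictMono x → (∀ i, x i ∈ H) →
      ∃ s : Set ℝ, s ⊆ H ∧ Nonempty (↥s ≃o (ℕ ⊕ₗ Fin k)) ∧
        (Fcol q k s = 0 ↔
          Nidx q (x (toLex (Sum.inl 2))) (x (toLex (Sum.inl 3))) <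
            Nidx q (x (toLex (Sum.inl 0))) (x (toLex (Sum.inl 1)))) := by
    intro H x hx hmem
    refine ⟨Set.range x, ?_, ⟨(StrictMono.orderIso x hx).symm⟩, ?_⟩
    · rintro _ ⟨i, rfl⟩; exact hmem i
    · have h := part1 (Set.range x) (StrictMono.orderIso x hx)
      simpa [StrictMono.orderIso_apply] using h
  -- Pattern 0 : a subset of colour 0.
  have pat0 : ∀ (H : Set ℝ) (v : ℕ → ℝ) (w : Fin k → ℝ) (x0 x1 x2 : ℝ),
      StrictMono v → StrictMono w → (∀ n j, v n < w j) →
      (∀ n, v n ∈ H) → (∀ j, w j ∈ H) → x0 ∈ H → x1 ∈ H → x2 ∈ H →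
      x0 < x1 → x1 < x2 → x2 ≤ v 0 →
      Nidx q (v 0) (v 1) < Nidx q x0 x1 →
      ∃ s, s ⊆ H ∧ Nonempty (↥s ≃o (ℕ ⊕ₗ Fin k)) ∧ Fcol q k s = 0 := by
    intro H v w x0 x1 x2 hv hw hvw hvH hwH h0H h1H h2H h01 h12 h2v hN
    set xN : ℕ → ℝ := fun n => match n with
      | 0 => x0 | 1 => x1 | 2 => x2 | 3 => v 1 | (n + 4) => v (n + 2) with hxN
    have hxNmono : StrictMono xN := by
      apply strictMono_nat_of_lt_succ
      intro n
      match n with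
      | 0 => exact h01
      | 1 => exact h12
      | 2 => exact h2v.trans_lt (hv one_pos)
      | 3 => exact hv (by norm_num)
      | (n + 4) => exact hv (by omega)
    have hxNw : ∀ n j, xN n < w j := by
      intro n j
      match n with
      | 0 => exact h01.trans (h12.trans (h2v.trans_lt (hvw 0 j)))
      | 1 => exact h12.trans (h2v.trans_lt (hvw 0 j))
      | 2 => exact h2v.trans_lt (hvw 0 j)
      | 3 => exact hvw 1 j
      | (n + 4) => exact hvw (n + 2) j
    obtain ⟨s, hsH, hsiso, hsF⟩ := build H (fun p => Sum.elim xN w (ofLex p))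
      (strictMono_sumElimLex xN w hxNmono hw hxNw)
      (by rintro (n | j)
          · match n with
            | 0 => exact h0H
            | 1 => exact h1H
            | 2 => exact h2H
            | 3 => exact hvH 1
            | (n + 4) => exact hvH (n + 2)
          · exact hwH j)
    refine ⟨s, hsH, hsiso, hsF.mpr ?_⟩
    show Nidx q x2 (v 1) < Nidx q x0 x1
    exact lt_of_le_of_lt (Nidx_mono q hqs h2v (hv one_pos) le_rfl) hN
  -- Pattern 1 : a subset of colour 1.
  have pat1 : ∀ (H : Set ℝ) (v : ℕ → ℝ) (w : Fin k → ℝ),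
      StrictMono v → StrictMono w → (∀ n j, v n < w j) →
      (∀ n, v n ∈ H) → (∀ j, w j ∈ H) →
      ∃ t, t ⊆ H ∧ Nonempty (↥t ≃o (ℕ ⊕ₗ Fin k)) ∧ Fcol q k t ≠ 0 := by
    intro H v w hv hw hvw hvH hwH
    obtain ⟨D, hD⟩ := Nat.sInf_mem (⟨_, 0, rfl⟩ :
      (Set.range fun d : ℕ => Nidx q (v 0) (v (d + 1))).Nonempty)
    have hmin : ∀ d : ℕ, Nidx q (v 0) (v (D + 1)) ≤ Nidx q (v 0) (v (d + 1)) :=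
      fun d => hD.le.trans (Nat.sInf_le ⟨d, rfl⟩)
    set xN : ℕ → ℝ := fun n => match n with
      | 0 => v 0 | (n + 1) => v (D + n + 1) with hxN
    have hxNmono : StrictMono xN := by
      apply strictMono_nat_of_lt_succ
      intro n
      match n with
      | 0 => exact hv (by omega)
      | (n + 1) => exact hv (by omega)
    have hxNw : ∀ n j, xN n < w j := by
      intro n j
      match n with
      | 0 => exact hvw 0 j
      | (n + 1) => exact hvw _ j
    obtain ⟨t, htH, htiso, htF⟩ := build H (fun p => Sum.elim xN w (ofLex p))
      (strictMono_sumElimLex xN w hxNmono hw hxNw)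
      (by rintro (n | j)
          · match n with
            | 0 => exact hvH 0
            | (n + 1) => exact hvH _
          · exact hwH j)
    refine ⟨t, htH, htiso, fun h0 => ?_⟩
    have hlt' : Nidx q (v (D + 1 + 1)) (v (D + 2 + 1)) < Nidx q (v 0) (v (D + 0 + 1)) :=
      htF.mp h0
    rw [show D + 1 + 1 = D + 2 by omega, show D + 2 + 1 = D + 3 by omega,
      show D + 0 + 1 = D + 1 by omega] at hlt'
    have h1 : Nidx q (v 0) (v (D + 3)) ≤ Nidx q (v (D + 2)) (v (D + 3)) :=
      Nidx_mono q hqs (hv.monotone (by omega)) (hv (by omega)) le_rfl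
    have h2 := hmin (D + 2)
    rw [show D + 2 + 1 = D + 3 by omega] at h2
    omega
  refine ⟨Fcol q k, part1, ?_⟩
  intro H hH
  rcases hH with h | h <;> obtain ⟨e⟩ := h
  · -- ω + ω + k
    set u : ℕ → ℝ := fun n => (e.symm (toLex (Sum.inl n)) : ℝ) with hu
    set v : ℕ → ℝ := fun n => (e.symm (toLex (Sum.inr (toLex (Sum.inl n)))) : ℝ) with hv
    set w : Fin k → ℝ := fun j => (e.symm (toLex (Sum.inr (toLex (Sum.inr j)))) : ℝ) with hw
    have hmono : ∀ p p' : ℕ ⊕ₗ (ℕ ⊕ₗ Fin k), p < p' → ((e.symm p : ℝ) < (e.symm p' : ℝ)) :=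
      fun p p' h => e.symm.strictMono h
    have humono : StrictMono u := fun a b h => hmono _ _ (Sum.Lex.inl_lt_inl_iff.mpr h)
    have hvmono : StrictMono v := fun a b h =>
      hmono _ _ (Sum.Lex.inr_lt_inr_iff.mpr (Sum.Lex.inl_lt_inl_iff.mpr h))
    have hwmono : StrictMono w := fun a b h =>
      hmono _ _ (Sum.Lex.inr_lt_inr_iff.mpr (Sum.Lex.inr_lt_inr_iff.mpr h))
    have huv : ∀ n m, u n < v m := fun n m => hmono _ _ (Sum.Lex.inl_lt_inr _ _)
    have hvw : ∀ n j, v n < w j := fun n j =>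
      hmono _ _ (Sum.Lex.inr_lt_inr_iff.mpr (Sum.Lex.inl_lt_inr _ _))
    have huH : ∀ n, u n ∈ H := fun n => (e.symm _).2
    have hvH : ∀ n, v n ∈ H := fun n => (e.symm _).2
    have hwH : ∀ j, w j ∈ H := fun j => (e.symm _).2
    obtain ⟨i, hi⟩ := Nidx_exists_big q hqs (fun i => u i) (fun i => u (i + 1))
      (fun i => humono (by omega)) (fun i j h => Or.inl (humono.monotone (by omega)))
      (Nidx q (v 0) (v 1))
    obtain ⟨s, hsH, hsiso, hsF⟩ := pat0 H v w (u i) (u (i + 1)) (u (i + 2))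
      hvmono hwmono hvw hvH hwH (huH i) (huH (i + 1)) (huH (i + 2))
      (humono (by omega)) (humono (by omega)) (huv (i + 2) 0).le hi
    obtain ⟨t, htH, htiso, htF⟩ := pat1 H v w hvmono hwmono hvw hvH hwH
    exact ⟨s, t, hsH, htH, hsiso, htiso, by rw [hsF]; exact fun h => htF h.symm⟩
  · -- ω* + ω + k
    set u : ℕ → ℝ := fun n => (e.symm (toLex (Sum.inl (OrderDual.toDual n))) : ℝ) with hu
    set v : ℕ → ℝ := fun n => (e.symm (toLex (Sum.inr (toLex (Sum.inl n)))) : ℝ) with hv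
    set w : Fin k → ℝ := fun j => (e.symm (toLex (Sum.inr (toLex (Sum.inr j)))) : ℝ) with hw
    have hmono : ∀ p p' : ℕᵒᵈ ⊕ₗ (ℕ ⊕ₗ Fin k), p < p' → ((e.symm p : ℝ) < (e.symm p' : ℝ)) :=
      fun p p' h => e.symm.strictMono h
    have huanti : ∀ a b : ℕ, a < b → u b < u a := fun a b h =>
      hmono _ _ (Sum.Lex.inl_lt_inl_iff.mpr (by exact_mod_cast h))
    have hvmono : StrictMono v := fun a b h =>
      hmono _ _ (Sum.Lex.inr_lt_inr_iff.mpr (Sum.Lex.inl_lt_inl_iff.mpr h))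
    have hwmono : StrictMono w := fun a b h =>
      hmono _ _ (Sum.Lex.inr_lt_inr_iff.mpr (Sum.Lex.inr_lt_inr_iff.mpr h))
    have huv : ∀ n m, u n < v m := fun n m => hmono _ _ (Sum.Lex.inl_lt_inr _ _)
    have hvw : ∀ n j, v n < w j := fun n j =>
      hmono _ _ (Sum.Lex.inr_lt_inr_iff.mpr (Sum.Lex.inl_lt_inr _ _))
    have huH : ∀ n, u n ∈ H := fun n => (e.symm _).2
    have hvH : ∀ n, v n ∈ H := fun n => (e.symm _).2
    have hwH : ∀ j, w j ∈ H := fun j => (e.symm _).2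
    have huantle : ∀ a b : ℕ, a ≤ b → u b ≤ u a := fun a b h =>
      h.lt_or_eq.elim (fun h' => (huanti _ _ h').le) (fun h' => h' ▸ le_rfl)
    obtain ⟨i, hi⟩ := Nidx_exists_big q hqs (fun i => u (i + 2)) (fun i => u (i + 1))
      (fun i => huanti _ _ (by omega))
      (fun i j h => Or.inr (huantle _ _ (by omega)))
      (Nidx q (v 0) (v 1))
    obtain ⟨s, hsH, hsiso, hsF⟩ := pat0 H v w (u (i + 2)) (u (i + 1)) (u 0)
      hvmono hwmono hvw hvH hwH (huH (i + 2)) (huH (i + 1)) (huH 0)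
      (huanti _ _ (by omega)) (huanti _ _ (by omega)) (huv 0 0).le hi
    obtain ⟨t, htH, htiso, htF⟩ := pat1 H v w hvmono hwmono hvw hvH hwH
    exact ⟨s, t, hsH, htH, hsiso, htiso, by rw [hsF]; exact fun h => htF h.symm⟩
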